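/- The convergent of the continued fraction expansion of C₁₀ truncated immediately before coefficient number 4 (the first high water mark of HWM number 4) is 10/81: the 3rd convergent numerator of GenContFract.of C₁₀ is 10 and the 3rd convergent denominator is 81; moreover its error satisfies 10^(−9) < 10/81 − C₁₀ < 11·10^(−10) (so the error is approximately 1.0·10^(−9) and the convergent exceeds C₁₀). -/

import Mathlib

/-- `pos n` is the position in the decimal expansion of Champernowne's constant
of the last digit of the integer `n`. -/
def pos (n : ℕ) : ℕ := ∑ k ∈ Finset.Icc 1 n, (Nat.digits 10 k).length

/-- Champernowne's constant in base ten. -/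
noncomputable def C₁₀ : ℝ := ∑' n : ℕ, ((n + 1 : ℕ) : ℝ) / 10 ^ pos (n + 1)

theorem pos_zero' : pos 0 = 0 := by simp [pos]

theorem pos_succ' (m : ℕ) : pos (m + 1) = pos m + (Nat.digits 10 (m+1)).length := by
  unfold pos; rw [Finset.sum_Icc_succ_top (by omega)]

theorem len_ge_two' {m : ℕ} (h : 10 ≤ m) : 2 ≤ (Nat.digits 10 m).length := by
  rw [Nat.digits_len 10 m (by norm_num) (by omega)]
  have := Nat.log_pos (b := 10) (by norm_num) (h : 10 ≤ m)
  omega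

theorem pos_ge' (n : ℕ) : n ≤ pos n := by
  induction n with
  | zero => simp [pos_zero']
  | succ n ih =>
    rw [pos_succ']
    have : (Nat.digits 10 (n+1)).length ≠ 0 := by
      simp [Nat.digits_ne_nil_iff_ne_zero]
    omega

theorem pos_ge2' (k : ℕ) : 15 + 2 * k ≤ pos (k + 12) := by
  induction k with
  | zero => simp [show pos 12 = 15 by simp [pos_succ', pos_zero']]
  | succ k ih =>
    have h2 : 2 ≤ (Nat.digits 10 (k + 12 + 1)).length := len_ge_two' (by omega)
    have h3 := pos_succ' (k + 12)
    have h4 : k + 1 + 12 = k + 12 + 1 := by omega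
    rw [h4]
    omega

noncomputable def champTerm (n : ℕ) : ℝ := ((n + 1 : ℕ) : ℝ) / 10 ^ pos (n + 1)

theorem champTerm_le (n : ℕ) : champTerm n ≤ (1/10 : ℝ) ^ pos n := by
  have hlen : ((n + 1 : ℕ) : ℝ) ≤ 10 ^ (Nat.digits 10 (n+1)).length := by
    exact_mod_cast (Nat.lt_base_pow_length_digits (by norm_num : 1 < 10)).le
  rw [champTerm, pos_succ', div_le_iff₀ (by positivity)]
  rw [div_pow, one_pow, pow_add]
  rw [div_mul_eq_mul_div, one_mul, le_div_iff₀ (by positivity)]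
  calc ((n + 1 : ℕ) : ℝ) * 10 ^ pos n ≤ 10 ^ (Nat.digits 10 (n+1)).length * 10 ^ pos n := by
        exact mul_le_mul_of_nonneg_right hlen (by positivity)
    _ = 10 ^ pos n * 10 ^ (Nat.digits 10 (n+1)).length := by ring

theorem champTerm_nonneg (n : ℕ) : 0 ≤ champTerm n := by unfold champTerm; positivity

theorem champSummable : Summable champTerm :=
  Summable.of_nonneg_of_le champTerm_nonneg
    (fun n => (champTerm_le n).trans
      (pow_le_pow_of_le_one (by norm_num) (by norm_num) (pos_ge' n)))
    (summable_geometric_of_lt_one (by norm_num) (by norm_num))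

theorem C_bounds : (123456789101112 / 10^15 : ℝ) ≤ C₁₀ ∧ C₁₀ ≤ 123456789101114 / 10^15 := by
  have hC : C₁₀ = ∑ i ∈ Finset.range 12, champTerm i + ∑' k, champTerm (k + 12) :=
    (Summable.sum_add_tsum_nat_add 12 champSummable).symm
  have hhead : ∑ i ∈ Finset.range 12, champTerm i = 123456789101112 / 10^15 := by
    simp [Finset.sum_range_succ, champTerm, pos_succ', pos_zero']
    norm_num
  have htail_nonneg : 0 ≤ ∑' k, champTerm (k + 12) :=
    tsum_nonneg (fun k => champTerm_nonneg _)
  have htail : ∑' k, champTerm (k + 12) ≤ 2 / 10^15 := by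
    have hb : ∀ k, champTerm (k + 12) ≤ (1/10:ℝ)^15 * (1/100)^k := by
      intro k
      refine (champTerm_le (k+12)).trans ?_
      calc ((1/10:ℝ))^(pos (k+12)) ≤ (1/10:ℝ)^(15 + 2*k) :=
            pow_le_pow_of_le_one (by norm_num) (by norm_num) (pos_ge2' k)
        _ = (1/10:ℝ)^15 * (1/100)^k := by
            rw [pow_add, pow_mul]; norm_num
    have hgs : Summable (fun k : ℕ => (1/10:ℝ)^15 * (1/100)^k) :=
      (summable_geometric_of_lt_one (by norm_num) (by norm_num)).mul_left _
    have := Summable.tsum_le_tsum hb ((summable_nat_add_iff 12).2 champSummable) hgs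
    refine this.trans ?_
    rw [tsum_mul_left, tsum_geometric_of_lt_one (by norm_num) (by norm_num)]
    norm_num
  constructor
  · rw [hC, hhead]; linarith
  · rw [hC, hhead]; linarith

set_option maxHeartbeats 1000000 in
theorem cf_aux (x : ℝ) (hlo : (123456789101112 / 10^15 : ℝ) ≤ x)
    (hhi : x ≤ 123456789101114 / 10^15) :
    (GenContFract.of x).nums 3 = 10 ∧ (GenContFract.of x).dens 3 = 81 := by
  have hx0 : (0:ℝ) < x := by nlinarith
  have hfl0 : ⌊x⌋ = 0 := by
    rw [Int.floor_eq_zero_iff]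
    exact Set.mem_Ico.2 ⟨le_of_lt hx0, by nlinarith⟩
  have hfr : Int.fract x = x := by rw [Int.fract, hfl0]; simp
  have hxx1 : x * x⁻¹ = 1 := mul_inv_cancel₀ (ne_of_gt hx0)
  set x1 := x⁻¹ with hx1def
  clear_value x1
  have hx1pos : 0 < x1 := by rw [hx1def]; exact inv_pos.2 hx0
  have key1 : (0:ℝ) < 10/81 - x := by nlinarith
  have key2 : (0:ℝ) < x - 19/154 := by nlinarith
  have h1l : (81/10:ℝ) < x1 := by nlinarith [mul_pos key1 hx1pos]
  have h1u : x1 < 154/19 := by nlinarith [mul_pos key2 hx1pos]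
  have hfl1 : ⌊x1⌋ = 8 := by
    rw [Int.floor_eq_iff]
    constructor <;> push_cast <;> nlinarith
  have hfr1 : Int.fract x1 = x1 - 8 := by rw [Int.fract, hfl1]; norm_num
  have hy0 : (0:ℝ) < x1 - 8 := by nlinarith
  have hyy : (x1 - 8) * (x1 - 8)⁻¹ = 1 := mul_inv_cancel₀ (ne_of_gt hy0)
  set x2 := (x1 - 8)⁻¹ with hx2def
  clear_value x2
  have hx2pos : 0 < x2 := by rw [hx2def]; exact inv_pos.2 hy0
  have h2l : (19/2:ℝ) < x2 := by
    nlinarith [mul_pos (show (0:ℝ) < 2/19 - (x1-8) by nlinarith) hx2pos]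
  have h2u : x2 < 10 := by
    nlinarith [mul_pos (show (0:ℝ) < (x1-8) - 1/10 by nlinarith) hx2pos]
  have hfl2 : ⌊x2⌋ = 9 := by
    rw [Int.floor_eq_iff]
    constructor <;> push_cast <;> nlinarith
  have hfr2 : Int.fract x2 = x2 - 9 := by rw [Int.fract, hfl2]; norm_num
  have hz0 : (0:ℝ) < x2 - 9 := by nlinarith
  have hzz : (x2 - 9) * (x2 - 9)⁻¹ = 1 := mul_inv_cancel₀ (ne_of_gt hz0)
  set x3 := (x2 - 9)⁻¹ with hx3def
  clear_value x3
  have hx3pos : 0 < x3 := by rw [hx3def]; exact inv_pos.2 hz0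
  have h3l : (1:ℝ) < x3 := by
    nlinarith [mul_pos (show (0:ℝ) < 1 - (x2-9) by nlinarith) hx3pos]
  have h3u : x3 < 2 := by
    nlinarith [mul_pos (show (0:ℝ) < (x2-9) - 1/2 by nlinarith) hx3pos]
  have hfl3 : ⌊x3⌋ = 1 := by
    rw [Int.floor_eq_iff]
    constructor <;> push_cast <;> nlinarith
  -- sequence entries
  have s0 : (GenContFract.of x).s.get? 0 = some ⟨1, (8:ℝ)⟩ := by
    have h := GenContFract.of_s_head (v := x) (by rw [hfr]; exact ne_of_gt hx0)
    rw [hfr, ← hx1def, hfl1] at h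
    exact_mod_cast h
  have s1 : (GenContFract.of x).s.get? 1 = some ⟨1, (9:ℝ)⟩ := by
    rw [GenContFract.of_s_succ, hfr, ← hx1def]
    have h := GenContFract.of_s_head (v := x1) (by rw [hfr1]; exact ne_of_gt hy0)
    rw [hfr1, ← hx2def, hfl2] at h
    exact_mod_cast h
  have s2 : (GenContFract.of x).s.get? 2 = some ⟨1, (1:ℝ)⟩ := by
    rw [GenContFract.of_s_succ, hfr, ← hx1def, GenContFract.of_s_succ, hfr1, ← hx2def]
    have h := GenContFract.of_s_head (v := x2) (by rw [hfr2]; exact ne_of_gt hz0)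
    rw [hfr2, ← hx3def, hfl3] at h
    exact_mod_cast h
  -- numerators and denominators
  have hh : (GenContFract.of x).h = 0 := by
    rw [GenContFract.of_h_eq_floor, hfl0]; norm_num
  have n0 : (GenContFract.of x).nums 0 = 0 := by
    rw [GenContFract.zeroth_num_eq_h, hh]
  have d0 : (GenContFract.of x).dens 0 = 1 := GenContFract.zeroth_den_eq_one
  have n1 : (GenContFract.of x).nums 1 = 1 := by
    rw [GenContFract.first_num_eq s0, hh]; norm_num
  have d1 : (GenContFract.of x).dens 1 = 8 := by
    rw [GenContFract.first_den_eq s0]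
  have n2 : (GenContFract.of x).nums 2 = 9 := by
    have := GenContFract.nums_recurrence (n := 0) s1 n0 n1
    rw [this]; norm_num
  have d2 : (GenContFract.of x).dens 2 = 73 := by
    have := GenContFract.dens_recurrence (n := 0) s1 d0 d1
    rw [this]; norm_num
  have n3 : (GenContFract.of x).nums 3 = 10 := by
    have := GenContFract.nums_recurrence (n := 1) s2 n1 n2
    rw [this]; norm_num
  have d3 : (GenContFract.of x).dens 3 = 81 := by
    have := GenContFract.dens_recurrence (n := 1) s2 d1 d2
    rw [this]; norm_num
  exact ⟨n3, d3⟩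

theorem convergent_before_hwm4 :
    (GenContFract.of C₁₀).nums 3 = 10 ∧ (GenContFract.of C₁₀).dens 3 = 81 ∧
    (10 : ℝ) ^ (-9 : ℤ) < 10 / 81 - C₁₀ ∧ 10 / 81 - C₁₀ < 11 * (10 : ℝ) ^ (-10 : ℤ) := by
  obtain ⟨hlo, hhi⟩ := C_bounds
  obtain ⟨hn, hd⟩ := cf_aux C₁₀ hlo hhi
  refine ⟨hn, hd, ?_, ?_⟩
  · have e1 : (10:ℝ) ^ (-9 : ℤ) = 1/10^9 := by norm_num
    have h : (123456789101114 / 10^15 : ℝ) < 10/81 - 1/10^9 := by norm_num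
    rw [e1]; linarith
  · have e2 : (10:ℝ) ^ (-10 : ℤ) = 1/10^10 := by norm_num
    have h : (10/81 : ℝ) - 11 * (1/10^10) < 123456789101112 / 10^15 := by norm_num
    rw [e2]; linarith
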